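/- arXiv:1809.03469 — 3 statements merged into one kernel-verified Lean document; each statement's English description precedes it below -/
import Mathlib

section
/- Let f be holomorphic on the punctured unit disk, let t be a real number, and suppose ∫ |f(z)|² |z|^(-2t) dA(z) < ∞ over the punctured disk. Then for every integer n with n ≤ t - 1, the n-th Laurent coefficient of f at 0 vanishes. -/
open MeasureTheory

open MeasureTheory Set Real

theorem my_lintegral_polar_real (G : ℝ × ℝ → ENNReal) :
    (∫⁻ p in polarCoord.target, ENNReal.ofReal p.1 * G (polarCoord.symm p)) = ∫⁻ p, G p := by
  have hmeas : MeasurableSet polarCoord.target := polarCoord.open_target.measurableSet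
  set B : ℝ × ℝ → ℝ × ℝ →L[ℝ] ℝ × ℝ := fun p =>
    LinearMap.toContinuousLinearMap (Matrix.toLin (Module.Basis.finTwoProd ℝ) (Module.Basis.finTwoProd ℝ)
      !![Real.cos p.2, -p.1 * Real.sin p.2; Real.sin p.2, p.1 * Real.cos p.2]) with hB
  have hder : ∀ p ∈ polarCoord.target,
      HasFDerivWithinAt polarCoord.symm (B p) polarCoord.target p :=
    fun p _ => (hasFDerivAt_polarCoord_symm p).hasFDerivWithinAt
  have hinj : InjOn polarCoord.symm polarCoord.target := by
    have := polarCoord.symm.injOn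
    simpa using this
  have B_det : ∀ p, (B p).det = p.1 := by
    intro p
    conv_rhs => rw [← one_mul p.1, ← cos_sq_add_sin_sq p.2]
    simp only [hB, neg_mul, LinearMap.det_toContinuousLinearMap, LinearMap.det_toLin,
      Matrix.det_fin_two_of, sub_neg_eq_add]
    ring
  have key := lintegral_image_eq_lintegral_abs_det_fderiv_mul volume hmeas hder hinj G
  rw [polarCoord.symm_image_target_eq_source] at key
  calc (∫⁻ p in polarCoord.target, ENNReal.ofReal p.1 * G (polarCoord.symm p))
      = ∫⁻ p in polarCoord.target, ENNReal.ofReal |(B p).det| * G (polarCoord.symm p) := by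
        refine setLIntegral_congr_fun hmeas (fun p hp => ?_)
        rw [B_det, abs_of_pos hp.1]
    _ = ∫⁻ p in polarCoord.source, G p := key.symm
    _ = ∫⁻ p, G p := by
        rw [setLIntegral_congr polarCoord_source_ae_eq_univ, setLIntegral_univ]

theorem my_lintegral_polar (g : ℂ → ENNReal) :
    (∫⁻ p in polarCoord.target, ENNReal.ofReal p.1 * g (Complex.polarCoord.symm p)) =
      ∫⁻ z, g z := by
  rw [← (Complex.volume_preserving_equiv_real_prod.symm).lintegral_comp_emb
    Complex.measurableEquivRealProd.symm.measurableEmbedding g, ← my_lintegral_polar_real]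
  rfl

lemma my_polar_symm_eq (r θ : ℝ) : Complex.polarCoord.symm (r, θ) = circleMap 0 r θ := by
  simp [Complex.polarCoord_symm_apply, circleMap, Complex.exp_mul_I]

lemma my_lintegral_rpow_top {s : ℝ} (hs : s ≤ -1) :
    ∫⁻ r in Ioo (0:ℝ) 1, ENNReal.ofReal (r ^ s) = ⊤ := by
  by_contra h
  have hmeas : AEStronglyMeasurable (fun r : ℝ => r ^ s) (volume.restrict (Ioo (0:ℝ) 1)) := by
    refine ContinuousOn.aestronglyMeasurable (fun x hx => ?_) measurableSet_Ioo
    exact (Real.continuousAt_rpow_const x s (Or.inl (ne_of_gt hx.1))).continuousWithinAt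
  have hint : IntegrableOn (fun r : ℝ => r ^ s) (Ioo (0:ℝ) 1) := by
    refine ⟨hmeas, ?_⟩
    rw [hasFiniteIntegral_iff_norm]
    have : ∫⁻ r in Ioo (0:ℝ) 1, ENNReal.ofReal ‖r ^ s‖ =
        ∫⁻ r in Ioo (0:ℝ) 1, ENNReal.ofReal (r ^ s) := by
      refine setLIntegral_congr_fun measurableSet_Ioo (fun x hx => ?_)
      rw [Real.norm_eq_abs, abs_of_nonneg (Real.rpow_nonneg hx.1.le s)]
    rw [this]
    exact lt_top_iff_ne_top.mpr h
  rw [intervalIntegral.integrableOn_Ioo_rpow_iff one_pos] at hint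
  linarith

lemma my_periodic_shift (h : ℝ → ENNReal) (hper : Function.Periodic h (2 * Real.pi)) :
    ∫⁻ θ in Ioc (0:ℝ) (2 * Real.pi), h θ = ∫⁻ θ in Ioo (-Real.pi) Real.pi, h θ := by
  haveI : Fact (0 < 2 * Real.pi) := ⟨by positivity⟩
  rw [Measure.restrict_congr_set Ioo_ae_eq_Ioc]
  have h1 := AddCircle.lintegral_preimage (2 * Real.pi) 0 hper.lift
  have h2 := AddCircle.lintegral_preimage (2 * Real.pi) (-Real.pi) hper.lift
  simp only [Function.Periodic.lift_coe] at h1 h2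
  rw [zero_add] at h1
  have hpi : -Real.pi + 2 * Real.pi = Real.pi := by ring
  rw [hpi] at h2
  rw [h1, ← h2]


/-- If `f` is holomorphic on the punctured unit disk and `∫ |f(z)|² |z|^(-2t) dA < ∞` there,
then for every integer `n ≤ t - 1` the `n`-th Laurent coefficient
`(1/(2πi)) ∮_{|z|=r} f(z) z^(-n-1) dz` of `f` at `0` vanishes. -/
theorem stmt2 (f : ℂ → ℂ) (t : ℝ)
    (hf : DifferentiableOn ℂ f {z : ℂ | 0 < ‖z‖ ∧ ‖z‖ < 1})
    (hL2 : IntegrableOn (fun z : ℂ => ‖f z‖ ^ 2 * ‖z‖ ^ (-2 * t))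
      {z : ℂ | 0 < ‖z‖ ∧ ‖z‖ < 1} volume) :
    ∀ n : ℤ, (n : ℝ) ≤ t - 1 → ∀ r : ℝ, 0 < r → r < 1 →
      (2 * Real.pi * Complex.I)⁻¹ * (∮ z in C(0, r), f z * z ^ (-n - 1)) = 0 := by
  intro n hn r hr0 hr1
  set S : Set ℂ := {z : ℂ | 0 < ‖z‖ ∧ ‖z‖ < 1} with hS
  have hSopen : IsOpen S := by
    have : S = (fun z : ℂ => ‖z‖) ⁻¹' (Ioo 0 1) := by ext z; simp [hS, mem_Ioo]
    rw [this]; exact isOpen_Ioo.preimage continuous_norm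
  have hfc : ContinuousOn f S := hf.continuousOn
  have hgd : ∀ z ∈ S, DifferentiableAt ℂ (fun z => f z * z ^ (-n - 1)) z := by
    intro z hz
    have hz0 : z ≠ 0 := fun h => by simp [hS, h] at hz
    exact (hf.differentiableAt (hSopen.mem_nhds hz)).mul
      (differentiableAt_zpow.mpr (Or.inl hz0))
  have key : ∀ a b : ℝ, 0 < a → a ≤ b → b < 1 →
      (∮ z in C(0, b), f z * z ^ (-n - 1)) = ∮ z in C(0, a), f z * z ^ (-n - 1) := by
    intro a b ha hab hb1
    have hsub : Metric.closedBall (0:ℂ) b \ Metric.ball (0:ℂ) a ⊆ S := by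
      rintro z ⟨h1, h2⟩
      simp only [Metric.mem_closedBall, Metric.mem_ball, Complex.dist_eq, sub_zero] at h1 h2
      exact ⟨lt_of_lt_of_le ha (not_lt.mp h2), lt_of_le_of_lt h1 hb1⟩
    refine Complex.circleIntegral_eq_of_differentiable_on_annulus_off_countable ha hab
      countable_empty (fun z hz => ((hgd z (hsub hz)).continuousAt).continuousWithinAt)
      (fun z hz => ?_)
    refine hgd z (hsub ?_)
    exact ⟨Metric.ball_subset_closedBall hz.1.1, fun h => hz.1.2 (Metric.ball_subset_closedBall h)⟩
  set c : ℂ := ∮ z in C(0, r), f z * z ^ (-n - 1) with hc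
  have hind : ∀ s : ℝ, 0 < s → s < 1 → (∮ z in C(0, s), f z * z ^ (-n - 1)) = c := by
    intro s hs0 hs1
    rcases le_total s r with h | h
    · exact (key s r hs0 h hr1).symm
    · exact key r s hr0 h hs1
  suffices hc0 : c = 0 by rw [hc0, mul_zero]
  have hcont : ∀ s : ℝ, 0 < s → s < 1 → Continuous fun θ => f (circleMap 0 s θ) := by
    intro s hs0 hs1
    refine hfc.comp_continuous (continuous_circleMap 0 s) fun θ => ?_
    simp [hS, norm_circleMap_zero, abs_of_pos hs0, hs0, hs1, hs0.ne']
  set P : ℝ → ENNReal := fun s =>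
    ∫⁻ θ in Ioc (0:ℝ) (2 * Real.pi), (‖f (circleMap 0 s θ)‖₊ : ENNReal) ^ 2 with hP
  -- pointwise lower bound
  have hbound : ∀ s : ℝ, 0 < s → s < 1 →
      (‖c‖₊ : ENNReal) ^ 2 ≤ ENNReal.ofReal (s ^ (-2 * (n:ℝ))) *
        (P s * ENNReal.ofReal (2 * Real.pi)) := by
    intro s hs0 hs1
    have hcont' := hcont s hs0 hs1
    have habs : ∀ θ : ℝ,
        ‖deriv (circleMap 0 s) θ • (f (circleMap 0 s θ) * (circleMap 0 s θ) ^ (-n - 1))‖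
          = s ^ (-n : ℤ) * ‖f (circleMap 0 s θ)‖ := by
      intro θ
      have hzabs : ‖circleMap 0 s θ‖ = s := by
        rw [norm_circleMap_zero, abs_of_pos hs0]
      have hz : s * s ^ (-n - 1 : ℤ) = s ^ (-n : ℤ) := by
        rw [← zpow_one_add₀ hs0.ne']
        congr 1
        ring
      rw [deriv_circleMap]
      simp only [smul_eq_mul, norm_mul, Complex.norm_I,
        norm_zpow, hzabs, mul_one]
      rw [← hz]
      ring
    have hnormle : ‖c‖ ≤ s ^ (-n : ℤ) *
        ∫ θ in (0:ℝ)..(2*Real.pi), ‖f (circleMap 0 s θ)‖ := by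
      rw [← hind s hs0 hs1]
      calc ‖∮ z in C(0,s), f z * z ^ (-n-1)‖
          ≤ ∫ θ in (0:ℝ)..(2*Real.pi), ‖deriv (circleMap 0 s) θ •
              (f (circleMap 0 s θ) * (circleMap 0 s θ) ^ (-n - 1))‖ :=
            intervalIntegral.norm_integral_le_integral_norm Real.two_pi_pos.le
        _ = ∫ θ in (0:ℝ)..(2*Real.pi), s ^ (-n:ℤ) * ‖f (circleMap 0 s θ)‖ := by
            simp only [habs]
        _ = s ^ (-n:ℤ) * ∫ θ in (0:ℝ)..(2*Real.pi), ‖f (circleMap 0 s θ)‖ :=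
            intervalIntegral.integral_const_mul _ _
    have hL : ENNReal.ofReal (∫ θ in (0:ℝ)..(2*Real.pi), ‖f (circleMap 0 s θ)‖)
        = ∫⁻ θ in Ioc (0:ℝ) (2*Real.pi), (‖f (circleMap 0 s θ)‖₊ : ENNReal) := by
      have hint : IntegrableOn (fun θ : ℝ => ‖f (circleMap 0 s θ)‖)
          (Ioc (0:ℝ) (2*Real.pi)) := (continuous_norm.comp hcont').integrableOn_Ioc
      rw [intervalIntegral.integral_of_le Real.two_pi_pos.le,
        ofReal_integral_eq_lintegral_ofReal hint
          (ae_of_all _ fun θ => norm_nonneg _)]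
      refine lintegral_congr fun θ => ?_
      rw [ofReal_norm, enorm_eq_nnnorm]
    have hrpow2 : ∀ x : ENNReal, x ^ (2:ℝ) = x ^ 2 := fun x => by
      rw [← ENNReal.rpow_natCast x 2]; norm_num
    have hCS : (∫⁻ θ in Ioc (0:ℝ) (2*Real.pi), (‖f (circleMap 0 s θ)‖₊ : ENNReal))
        ≤ (P s) ^ ((1:ℝ)/2) * (ENNReal.ofReal (2*Real.pi)) ^ ((1:ℝ)/2) := by
      have hpq : (2:ℝ).HolderConjugate 2 := Real.HolderConjugate.two_two
      have hmeasf : AEMeasurable (fun θ => (‖f (circleMap 0 s θ)‖₊ : ENNReal))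
          (volume.restrict (Ioc (0:ℝ) (2*Real.pi))) :=
        (ENNReal.continuous_coe.comp hcont'.nnnorm).aemeasurable
      have := ENNReal.lintegral_mul_le_Lp_mul_Lq (volume.restrict (Ioc (0:ℝ) (2*Real.pi))) hpq
        hmeasf (aemeasurable_const (b := (1:ENNReal)))
      simp only [Pi.mul_apply, mul_one, ENNReal.one_rpow, hrpow2, lintegral_const,
        Measure.restrict_apply MeasurableSet.univ, univ_inter, Real.volume_Ioc, sub_zero,
        one_mul, one_pow] at this
      exact this
    have hAle : (‖c‖₊ : ENNReal) ≤ ENNReal.ofReal (s ^ (-n:ℤ)) *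
        ((P s) ^ ((1:ℝ)/2) * (ENNReal.ofReal (2*Real.pi)) ^ ((1:ℝ)/2)) := by
      calc (‖c‖₊ : ENNReal) = ENNReal.ofReal ‖c‖ := (ofReal_norm c).symm
        _ ≤ ENNReal.ofReal (s ^ (-n:ℤ) *
            ∫ θ in (0:ℝ)..(2*Real.pi), ‖f (circleMap 0 s θ)‖) :=
          ENNReal.ofReal_le_ofReal hnormle
        _ = ENNReal.ofReal (s ^ (-n:ℤ)) * ENNReal.ofReal
            (∫ θ in (0:ℝ)..(2*Real.pi), ‖f (circleMap 0 s θ)‖) :=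
          ENNReal.ofReal_mul (zpow_nonneg hs0.le _)
        _ = ENNReal.ofReal (s ^ (-n:ℤ)) *
            ∫⁻ θ in Ioc (0:ℝ) (2*Real.pi), (‖f (circleMap 0 s θ)‖₊ : ENNReal) := by rw [hL]
        _ ≤ _ := mul_le_mul_right hCS _
    have hsq := pow_le_pow_left' hAle 2
    have e1 : (ENNReal.ofReal (s ^ (-n:ℤ))) ^ 2 = ENNReal.ofReal (s ^ (-2 * (n:ℝ))) := by
      rw [← ENNReal.ofReal_pow (zpow_nonneg hs0.le _)]
      congr 1
      rw [← Real.rpow_intCast s (-n), ← Real.rpow_natCast (s ^ ((-n:ℤ):ℝ)) 2,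
        ← Real.rpow_mul hs0.le]
      congr 1
      push_cast
      ring
    have e2 : ((P s) ^ ((1:ℝ)/2)) ^ 2 = P s := by
      rw [← ENNReal.rpow_natCast _ 2, ← ENNReal.rpow_mul]
      norm_num
    have e3 : ((ENNReal.ofReal (2*Real.pi)) ^ ((1:ℝ)/2)) ^ 2 = ENNReal.ofReal (2*Real.pi) := by
      rw [← ENNReal.rpow_natCast _ 2, ← ENNReal.rpow_mul]
      norm_num
    calc (‖c‖₊ : ENNReal) ^ 2 ≤ (ENNReal.ofReal (s ^ (-n:ℤ)) *
        ((P s) ^ ((1:ℝ)/2) * (ENNReal.ofReal (2*Real.pi)) ^ ((1:ℝ)/2))) ^ 2 := hsq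
      _ = (ENNReal.ofReal (s ^ (-n:ℤ)))^2 * (((P s) ^ ((1:ℝ)/2))^2 *
          ((ENNReal.ofReal (2*Real.pi)) ^ ((1:ℝ)/2))^2) := by ring
      _ = ENNReal.ofReal (s ^ (-2 * (n:ℝ))) * (P s * ENNReal.ofReal (2*Real.pi)) := by
          rw [e1, e2, e3]
  -- finiteness via polar coordinates
  have hfin : ∫⁻ s in Ioo (0:ℝ) 1,
      (ENNReal.ofReal s * ENNReal.ofReal (s ^ (-2 * t))) * P s < ⊤ := by
    set g : ℂ → ENNReal := S.indicator
      (fun z => (‖f z‖₊ : ENNReal) ^ 2 * ENNReal.ofReal (‖z‖ ^ (-2*t))) with hgdef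
    have hgfin : ∫⁻ z, g z < ⊤ := by
      rw [hgdef, lintegral_indicator hSopen.measurableSet]
      have h2 := hL2.2
      rw [hasFiniteIntegral_iff_norm] at h2
      refine lt_of_eq_of_lt ?_ h2
      refine lintegral_congr fun z => ?_
      rw [Real.norm_eq_abs, abs_of_nonneg (mul_nonneg (sq_nonneg _)
          (Real.rpow_nonneg (norm_nonneg _) _)),
        ENNReal.ofReal_mul (sq_nonneg _), ENNReal.ofReal_pow (norm_nonneg _)]
      congr 2
      rw [ofReal_norm, enorm_eq_nnnorm]
    have hpolar := my_lintegral_polar g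
    set T : Set (ℝ×ℝ) := Ioo (0:ℝ) 1 ×ˢ Ioo (-Real.pi) Real.pi with hT
    have hTsub : T ⊆ polarCoord.target := by
      have htarget : polarCoord.target = Ioi (0:ℝ) ×ˢ Ioo (-Real.pi) Real.pi := rfl
      rw [hT, htarget]
      exact prod_mono Ioo_subset_Ioi_self subset_rfl
    have hTfin : ∫⁻ p in T, ENNReal.ofReal p.1 * g (Complex.polarCoord.symm p) < ⊤ :=
      lt_of_le_of_lt (lintegral_mono_set hTsub) (hpolar ▸ hgfin)
    have hcongr : (∫⁻ p in T, ENNReal.ofReal p.1 * g (Complex.polarCoord.symm p))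
        = ∫⁻ p in T, ENNReal.ofReal p.1 *
          ((‖f (circleMap 0 p.1 p.2)‖₊ : ENNReal) ^ 2 * ENNReal.ofReal (p.1 ^ (-2*t))) := by
      refine setLIntegral_congr_fun (measurableSet_Ioo.prod measurableSet_Ioo) ?_
      rintro ⟨u, θ⟩ ⟨hu, hθ⟩
      have habsu : ‖Complex.polarCoord.symm (u, θ)‖ = u := by
        rw [Complex.norm_polarCoord_symm, abs_of_pos hu.1]
      have hmem : Complex.polarCoord.symm (u, θ) ∈ S := by
        rw [hS]; exact ⟨by rw [habsu]; exact hu.1, by rw [habsu]; exact hu.2⟩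
      simp only [hgdef, ← my_polar_symm_eq, indicator_of_mem hmem, habsu]
    have hcm : Continuous fun p : ℝ × ℝ => circleMap 0 p.1 p.2 := by
      simp only [circleMap, zero_add]
      exact (Complex.continuous_ofReal.comp continuous_fst).mul
        (Complex.continuous_exp.comp
          ((Complex.continuous_ofReal.comp continuous_snd).mul continuous_const))
    have hTmeas : MeasurableSet T := measurableSet_Ioo.prod measurableSet_Ioo
    have h1 : ContinuousOn (fun p : ℝ×ℝ => f (circleMap 0 p.1 p.2)) T := by
      refine hfc.comp hcm.continuousOn ?_
      rintro ⟨u, θ⟩ ⟨hu, hθ⟩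
      simp [hS, norm_circleMap_zero, abs_of_pos hu.1, hu.1, hu.2, (hu.1).ne']
    have h3 : ContinuousOn (fun p : ℝ×ℝ => (p.1 : ℝ) ^ (-2*t)) T :=
      ContinuousOn.rpow_const continuous_fst.continuousOn
        (fun p hp => Or.inl (ne_of_gt hp.1.1))
    have haemeas : AEMeasurable (fun p : ℝ×ℝ => ENNReal.ofReal p.1 *
        ((‖f (circleMap 0 p.1 p.2)‖₊ : ENNReal) ^ 2 * ENNReal.ofReal (p.1 ^ (-2*t))))
        ((volume.restrict (Ioo (0:ℝ) 1)).prod (volume.restrict (Ioo (-Real.pi) Real.pi))) := by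
      rw [Measure.prod_restrict, ← Measure.volume_eq_prod]
      refine AEMeasurable.mul (M := ENNReal) ?_ (AEMeasurable.mul (M := ENNReal) ?_ ?_)
      · exact (ENNReal.measurable_ofReal.comp measurable_fst).aemeasurable
      · exact (((measurable_coe_nnreal_ennreal.comp measurable_nnnorm).pow_const 2).comp_aemeasurable
          (h1.aemeasurable hTmeas))
      · exact (ENNReal.measurable_ofReal.comp_aemeasurable (h3.aemeasurable hTmeas))
    have hF : (∫⁻ p in T, ENNReal.ofReal p.1 *
        ((‖f (circleMap 0 p.1 p.2)‖₊ : ENNReal) ^ 2 * ENNReal.ofReal (p.1 ^ (-2*t))))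
        = ∫⁻ u in Ioo (0:ℝ) 1, ∫⁻ θ in Ioo (-Real.pi) Real.pi,
            ENNReal.ofReal u * ((‖f (circleMap 0 u θ)‖₊ : ENNReal) ^ 2 *
              ENNReal.ofReal (u ^ (-2*t))) := by
      rw [hT, Measure.volume_eq_prod, ← Measure.prod_restrict]
      exact lintegral_prod _ haemeas
    have hinner : ∀ u : ℝ, u ∈ Ioo (0:ℝ) 1 →
        (∫⁻ θ in Ioo (-Real.pi) Real.pi, ENNReal.ofReal u *
          ((‖f (circleMap 0 u θ)‖₊ : ENNReal) ^ 2 * ENNReal.ofReal (u ^ (-2*t))))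
        = (ENNReal.ofReal u * ENNReal.ofReal (u ^ (-2 * t))) * P u := by
      intro u hu
      have hper : Function.Periodic (fun θ => (‖f (circleMap 0 u θ)‖₊ : ENNReal) ^ 2)
          (2*Real.pi) := fun θ =>
        congrArg (fun z => ((‖f z‖₊ : ENNReal)) ^ 2) (periodic_circleMap 0 u θ)
      calc (∫⁻ θ in Ioo (-Real.pi) Real.pi, ENNReal.ofReal u *
            ((‖f (circleMap 0 u θ)‖₊ : ENNReal) ^ 2 * ENNReal.ofReal (u ^ (-2*t))))
          = ∫⁻ θ in Ioo (-Real.pi) Real.pi, (ENNReal.ofReal u * ENNReal.ofReal (u ^ (-2*t))) *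
              (‖f (circleMap 0 u θ)‖₊ : ENNReal) ^ 2 := by
            refine lintegral_congr fun θ => by ring
        _ = (ENNReal.ofReal u * ENNReal.ofReal (u ^ (-2*t))) *
            ∫⁻ θ in Ioo (-Real.pi) Real.pi, (‖f (circleMap 0 u θ)‖₊ : ENNReal) ^ 2 :=
            lintegral_const_mul' _ _
              (ENNReal.mul_ne_top ENNReal.ofReal_ne_top ENNReal.ofReal_ne_top)
        _ = (ENNReal.ofReal u * ENNReal.ofReal (u ^ (-2 * t))) * P u := by
            rw [hP, ← my_periodic_shift _ hper]
    calc ∫⁻ s in Ioo (0:ℝ) 1, (ENNReal.ofReal s * ENNReal.ofReal (s ^ (-2 * t))) * P s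
        = ∫⁻ u in Ioo (0:ℝ) 1, ∫⁻ θ in Ioo (-Real.pi) Real.pi,
            ENNReal.ofReal u * ((‖f (circleMap 0 u θ)‖₊ : ENNReal) ^ 2 *
              ENNReal.ofReal (u ^ (-2*t))) := by
          refine (setLIntegral_congr_fun measurableSet_Ioo
            (fun u hu => ?_)).symm
          exact hinner u hu
      _ = ∫⁻ p in T, ENNReal.ofReal p.1 *
          ((‖f (circleMap 0 p.1 p.2)‖₊ : ENNReal) ^ 2 * ENNReal.ofReal (p.1 ^ (-2*t))) :=
          hF.symm
      _ = ∫⁻ p in T, ENNReal.ofReal p.1 * g (Complex.polarCoord.symm p) := hcongr.symm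
      _ < ⊤ := hTfin
  -- combine
  by_contra hcne
  have hA : (‖c‖₊ : ENNReal) ^ 2 ≠ 0 := by
    simp [pow_eq_zero_iff, nnnorm_eq_zero, hcne]
  have hI : ∫⁻ s in Ioo (0:ℝ) 1, ENNReal.ofReal (s ^ (2 * (n:ℝ) + 1 - 2 * t)) = ⊤ :=
    my_lintegral_rpow_top (by linarith)
  have hmono : (‖c‖₊ : ENNReal) ^ 2 *
      ∫⁻ s in Ioo (0:ℝ) 1, ENNReal.ofReal (s ^ (2 * (n:ℝ) + 1 - 2 * t)) ≤
      ENNReal.ofReal (2 * Real.pi) * ∫⁻ s in Ioo (0:ℝ) 1,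
        (ENNReal.ofReal s * ENNReal.ofReal (s ^ (-2 * t))) * P s := by
    rw [← lintegral_const_mul' _ _ (by simp), ← lintegral_const_mul' _ _ ENNReal.ofReal_ne_top]
    refine lintegral_mono_ae ((ae_restrict_iff' measurableSet_Ioo).mpr
      (ae_of_all _ fun s hs => ?_))
    have e : ENNReal.ofReal (s ^ (-2 * (n:ℝ))) *
        ENNReal.ofReal (s ^ (2 * (n:ℝ) + 1 - 2 * t)) =
        ENNReal.ofReal s * ENNReal.ofReal (s ^ (-2 * t)) := by
      rw [← ENNReal.ofReal_mul (Real.rpow_nonneg hs.1.le _),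
        ← ENNReal.ofReal_mul hs.1.le, ← Real.rpow_add hs.1]
      congr 1
      rw [show s * s ^ (-2 * t) = s ^ (1 + -2 * t) by
        rw [Real.rpow_add hs.1, Real.rpow_one]]
      congr 1
      ring
    calc (‖c‖₊ : ENNReal) ^ 2 * ENNReal.ofReal (s ^ (2 * (n:ℝ) + 1 - 2 * t))
        ≤ (ENNReal.ofReal (s ^ (-2 * (n:ℝ))) * (P s * ENNReal.ofReal (2 * Real.pi))) *
            ENNReal.ofReal (s ^ (2 * (n:ℝ) + 1 - 2 * t)) :=
          mul_le_mul_left (hbound s hs.1 hs.2) _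
      _ = ENNReal.ofReal (2 * Real.pi) *
          ((ENNReal.ofReal s * ENNReal.ofReal (s ^ (-2 * t))) * P s) := by
          rw [← e]; ring
  rw [hI, ENNReal.mul_top hA] at hmono
  exact absurd (lt_of_le_of_lt hmono (ENNReal.mul_lt_top ENNReal.ofReal_lt_top hfin))
    (lt_irrefl ⊤)
end

section
/- For every real number t, the set of holomorphic functions f on the punctured unit disk satisfying ∫_{0<|z|<1/2} |f(z)|² |z|^(-2t) dA(z) < ∞ equals the set of functions of the form z^⌊t⌋ · g(z) restricted to the punctured disk, where g is holomorphic on the full unit disk and ∫_{|z|<1/2} |g(z)|² |z|^(2(⌊t⌋ - t)) dA(z) < ∞. -/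
open MeasureTheory

open Set Metric Filter Complex intervalIntegral Real Topology
open scoped ENNReal NNReal

lemma lemA {f : ℂ → ℂ} {c : ℂ} {ρ : ℝ} (hρ : 0 < ρ)
    (hd : ∀ z ∈ closedBall c ρ, DifferentiableAt ℂ f z) :
    2 * π * ‖f c‖ ^ 2 ≤ ∫ θ in (0:ℝ)..(2 * π), ‖f (circleMap c ρ θ)‖ ^ 2 := by
  set F : ℂ → ℂ := fun z => f z * f z with hF
  have hFd : ∀ z ∈ closedBall c ρ, DifferentiableAt ℂ F z := fun z hz => (hd z hz).mul (hd z hz)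
  have key := Complex.circleIntegral_sub_center_inv_smul_of_differentiable_on_off_countable hρ
    countable_empty (fun z hz => (hFd z hz).continuousAt.continuousWithinAt)
    (fun z hz => hFd z (ball_subset_closedBall hz.1))
  have hnorm : ‖(2 * ↑π * I : ℂ) • F c‖ = 2 * π * ‖f c‖ ^ 2 := by
    simp [norm_smul, hF, Complex.norm_def, pow_two, Real.pi_nonneg,
      abs_of_nonneg, mul_comm, mul_assoc, mul_left_comm]
  calc 2 * π * ‖f c‖ ^ 2 = ‖(2 * ↑π * I : ℂ) • F c‖ := hnorm.symm
    _ = ‖∮ z in C(c, ρ), (z - c)⁻¹ • F z‖ := by rw [key]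
    _ ≤ ∫ θ in (0:ℝ)..(2 * π), ‖deriv (circleMap c ρ) θ •
          ((circleMap c ρ θ - c)⁻¹ • F (circleMap c ρ θ))‖ := by
        rw [circleIntegral]
        exact intervalIntegral.norm_integral_le_integral_norm (by positivity)
    _ = ∫ θ in (0:ℝ)..(2 * π), ‖f (circleMap c ρ θ)‖ ^ 2 := by
        refine intervalIntegral.integral_congr fun θ _ => ?_
        rw [norm_smul, norm_smul, deriv_circleMap, circleMap_sub_center]
        have h1 : ‖circleMap 0 ρ θ * I‖ = ρ := by
          simp [abs_of_pos hρ]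
        have h2 : ‖(circleMap 0 ρ θ)⁻¹‖ = ρ⁻¹ := by
          simp [abs_of_pos hρ]
        rw [h1, h2]
        have : ‖F (circleMap c ρ θ)‖ = ‖f (circleMap c ρ θ)‖ ^ 2 := by
          simp [hF, pow_two]
        rw [this]
        field_simp

lemma lemB {f : ℂ → ℂ} {c : ℂ} {r : ℝ} (hr : 0 < r)
    (hd : ∀ z ∈ closedBall c r, DifferentiableAt ℂ f z) :
    π * r ^ 2 * ‖f c‖ ^ 2 ≤ ∫ z in ball c r, ‖f z‖ ^ 2 := by
  have hfc : ContinuousOn f (closedBall c r) :=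
    fun z hz => (hd z hz).continuousAt.continuousWithinAt
  set G : ℂ → ℝ := (ball (0:ℂ) r).indicator (fun w => ‖f (c + w)‖ ^ 2) with hG
  set T : Set (ℝ × ℝ) := Ioo 0 r ×ˢ Ioo (-π) π with hT
  set φ : ℝ × ℝ → ℝ := fun p => p.1 * ‖f (c + Complex.polarCoord.symm p)‖ ^ 2 with hφ
  have hTm : MeasurableSet T := measurableSet_Ioo.prod measurableSet_Ioo
  -- the symm map
  have hsymm : Continuous fun p : ℝ × ℝ => Complex.polarCoord.symm p := by
    simp only [Complex.polarCoord_symm_apply]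
    continuity
  have habs : ∀ p : ℝ × ℝ, ‖Complex.polarCoord.symm p‖ = |p.1| :=
    Complex.norm_polarCoord_symm
  have hmapsT : ∀ p ∈ T, c + Complex.polarCoord.symm p ∈ closedBall c r := by
    intro p hp
    rw [mem_closedBall_iff_norm, add_sub_cancel_left, habs,
      abs_of_pos hp.1.1]
    exact hp.1.2.le
  -- continuity of φ on T
  have hφc : ContinuousOn φ T := by
    apply (continuous_fst.continuousOn (s := T)).mul
    apply ContinuousOn.pow
    apply ContinuousOn.norm
    exact hfc.comp ((continuous_const.add hsymm).continuousOn) hmapsT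
  -- bound
  obtain ⟨M, hM⟩ := isCompact_closedBall c r |>.exists_bound_of_continuousOn hfc
  have hM0 : 0 ≤ M := le_trans (norm_nonneg _) (hM c (mem_closedBall_self hr.le))
  -- measure of T finite
  have hTfin : volume T ≠ ⊤ := by
    rw [hT, MeasureTheory.Measure.volume_eq_prod, Measure.prod_prod]
    exact ENNReal.mul_ne_top (by simp [Real.volume_Ioo]) (by simp [Real.volume_Ioo])
  -- integrability of φ on T
  have hφint : IntegrableOn φ T := by
    have hconst : IntegrableOn (fun _ : ℝ × ℝ => r * M ^ 2) T :=
      integrableOn_const hTfin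
    apply hconst.mono' (hφc.aestronglyMeasurable hTm)
    rw [ae_restrict_iff' hTm]
    refine ae_of_all _ fun p hp => ?_
    have h1 : ‖f (c + Complex.polarCoord.symm p)‖ ≤ M := hM _ (hmapsT p hp)
    have h2 : ‖φ p‖ = p.1 * ‖f (c + Complex.polarCoord.symm p)‖ ^ 2 := by
      rw [hφ, Real.norm_eq_abs, _root_.abs_of_nonneg]
      exact mul_nonneg hp.1.1.le (pow_nonneg (norm_nonneg _) 2)
    rw [h2]
    exact mul_le_mul hp.1.2.le (pow_le_pow_left₀ (norm_nonneg _) h1 2)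
      (pow_nonneg (norm_nonneg _) 2) hr.le
  -- chain of equalities
  have h1 : ∫ z in ball c r, ‖f z‖ ^ 2
      = ∫ z, (ball c r).indicator (fun z => ‖f z‖ ^ 2) z :=
    (MeasureTheory.integral_indicator measurableSet_ball).symm
  have h2 : ∫ z, (ball c r).indicator (fun z => ‖f z‖ ^ 2) z = ∫ w, G w := by
    rw [← MeasureTheory.integral_add_left_eq_self ((ball c r).indicator fun z => ‖f z‖ ^ 2) c]
    refine integral_congr_ae (ae_of_all _ fun w => ?_)
    by_cases hw : w ∈ ball (0:ℂ) r
    · have : c + w ∈ ball c r := by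
        rwa [mem_ball_iff_norm, add_sub_cancel_left, ← mem_ball_zero_iff]
      simp [hG, Set.indicator_of_mem, hw, this]
    · have : c + w ∉ ball c r := by
        rwa [mem_ball_iff_norm, add_sub_cancel_left, ← mem_ball_zero_iff]
      simp [hG, Set.indicator_of_notMem, hw, this]
  have h3 : ∫ w, G w = ∫ p in polarCoord.target, p.1 • G (Complex.polarCoord.symm p) :=
    (Complex.integral_comp_polarCoord_symm G).symm
  have hTsub : T ⊆ polarCoord.target := by
    rw [polarCoord_target, hT]
    exact Set.prod_mono (Ioo_subset_Ioi_self) subset_rfl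
  have h4 : ∫ p in polarCoord.target, p.1 • G (Complex.polarCoord.symm p) = ∫ p in T, φ p := by
    calc ∫ p in polarCoord.target, p.1 • G (Complex.polarCoord.symm p)
        = ∫ p in polarCoord.target, T.indicator (fun p => p.1 • G (Complex.polarCoord.symm p)) p := by
          refine setIntegral_congr_fun polarCoord.open_target.measurableSet fun p hp => ?_
          rw [polarCoord_target] at hp
          by_cases hpT : p ∈ T
          · rw [Set.indicator_of_mem hpT]
          · rw [Set.indicator_of_notMem hpT]
            have hge : r ≤ p.1 := by
              by_contra hlt
              exact hpT ⟨⟨hp.1, lt_of_not_ge hlt⟩, hp.2⟩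
            have hmem : Complex.polarCoord.symm p ∉ ball (0:ℂ) r := by
              rw [mem_ball_zero_iff, habs, _root_.abs_of_pos hp.1]
              exact not_lt.2 hge
            rw [hG, Set.indicator_of_notMem hmem, smul_zero]
      _ = ∫ p in polarCoord.target ∩ T, p.1 • G (Complex.polarCoord.symm p) :=
          setIntegral_indicator hTm
      _ = ∫ p in T, p.1 • G (Complex.polarCoord.symm p) := by
          rw [Set.inter_eq_self_of_subset_right hTsub]
      _ = ∫ p in T, φ p := by
          refine setIntegral_congr_fun hTm fun p hp => ?_
          have hmem : Complex.polarCoord.symm p ∈ ball (0:ℂ) r := by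
            rw [mem_ball_zero_iff, habs, _root_.abs_of_pos hp.1.1]
            exact hp.1.2
          rw [hG, Set.indicator_of_mem hmem, hφ, smul_eq_mul]
  -- Fubini
  have hrestr : (volume : Measure (ℝ × ℝ)).restrict T
      = (volume.restrict (Ioo 0 r)).prod (volume.restrict (Ioo (-π) π)) := by
    rw [Measure.prod_restrict, hT, ← MeasureTheory.Measure.volume_eq_prod]
  have hφint' : Integrable φ
      ((volume.restrict (Ioo 0 r)).prod (volume.restrict (Ioo (-π) π))) := by
    rwa [IntegrableOn, hrestr] at hφint
  have h5 : ∫ p in T, φ p = ∫ ρ in Ioo 0 r, ∫ θ in Ioo (-π) π, φ (ρ, θ) := by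
    have key := MeasureTheory.integral_prod φ hφint'
    rw [← hrestr] at key
    exact key
  -- inner circle estimate
  have hinner : ∀ ρ ∈ Ioo (0:ℝ) r,
      2 * π * ‖f c‖ ^ 2 * ρ ≤ ∫ θ in Ioo (-π) π, φ (ρ, θ) := by
    intro ρ hρ
    have hcm : ∀ θ : ℝ, c + Complex.polarCoord.symm (ρ, θ) = circleMap c ρ θ := by
      intro θ
      simp [Complex.polarCoord_symm_apply, circleMap, Complex.exp_mul_I]
    have hsub : closedBall c ρ ⊆ closedBall c r := closedBall_subset_closedBall hρ.2.le
    have hA := lemA hρ.1 (fun z hz => hd z (hsub hz))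
    set u : ℝ → ℝ := fun θ => ‖f (circleMap c ρ θ)‖ ^ 2 with hu
    have hper : Function.Periodic u (2 * π) := fun θ => by
      simp [hu, periodic_circleMap c ρ θ]
    have hIoo : ∫ θ in Ioo (-π) π, φ (ρ, θ) = ρ * ∫ θ in Ioo (-π) π, u θ := by
      rw [← MeasureTheory.integral_const_mul]
      refine setIntegral_congr_fun measurableSet_Ioo fun θ _ => ?_
      rw [hφ, hu]
      simp only
      rw [hcm θ]
    have hval : ∫ θ in Ioo (-π) π, u θ = ∫ θ in (0:ℝ)..(2*π), u θ := by
      rw [← MeasureTheory.integral_Ioc_eq_integral_Ioo,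
        ← intervalIntegral.integral_of_le (by linarith [Real.pi_pos] : (-π:ℝ) ≤ π)]
      have heq : ∫ θ in (-π)..π, u θ = ∫ θ in (-π)..(-π + 2*π), u θ := by
        congr 1
        ring
      rw [heq, hper.intervalIntegral_add_eq (-π) 0, zero_add]
    rw [hIoo, hval]
    have := mul_le_mul_of_nonneg_left hA hρ.1.le
    linarith
  -- outer estimate
  have hΨint : IntegrableOn (fun ρ => ∫ θ in Ioo (-π) π, φ (ρ, θ)) (Ioo 0 r) :=
    hφint'.integral_prod_left
  have hlin : IntegrableOn (fun ρ : ℝ => 2 * π * ‖f c‖ ^ 2 * ρ) (Ioo 0 r) := by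
    apply IntegrableOn.mono_set (t := Icc 0 r) _ Ioo_subset_Icc_self
    exact (continuous_const.mul continuous_id).integrableOn_Icc
  have houter : ∫ ρ in Ioo 0 r, 2 * π * ‖f c‖ ^ 2 * ρ ≤ ∫ p in T, φ p := by
    rw [h5]
    exact setIntegral_mono_on hlin hΨint measurableSet_Ioo hinner
  have hval2 : ∫ ρ in Ioo 0 r, 2 * π * ‖f c‖ ^ 2 * ρ = π * r ^ 2 * ‖f c‖ ^ 2 := by
    rw [MeasureTheory.integral_const_mul]
    have hid : ∫ ρ in Ioo (0:ℝ) r, ρ = r ^ 2 / 2 := by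
      rw [← MeasureTheory.integral_Ioc_eq_integral_Ioo,
        ← intervalIntegral.integral_of_le hr.le, integral_id]
      ring
    rw [hid]
    ring
  rw [h1, h2, h3, h4]
  linarith [houter, hval2]

lemma lemW (t : ℝ) : ∃ κ : ℝ, 0 < κ ∧ ∀ a b : ℝ, 0 < a → a / 2 ≤ b → b ≤ 3 * a / 2 →
    κ * a ^ (-2 * t) ≤ b ^ (-2 * t) := by
  refine ⟨min ((1/2:ℝ) ^ (-2*t)) ((3/2:ℝ) ^ (-2*t)), lt_min (by positivity) (by positivity),
    fun a b ha hab hba => ?_⟩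
  have hb : 0 < b := lt_of_lt_of_le (by linarith) hab
  rcases le_or_gt 0 (-2*t) with he | he
  · calc min ((1/2:ℝ) ^ (-2*t)) ((3/2:ℝ) ^ (-2*t)) * a ^ (-2*t)
        ≤ (1/2:ℝ) ^ (-2*t) * a ^ (-2*t) :=
          mul_le_mul_of_nonneg_right (min_le_left _ _) (by positivity)
      _ = (a / 2) ^ (-2*t) := by
          rw [← Real.mul_rpow (by norm_num) ha.le]; ring_nf
      _ ≤ b ^ (-2*t) := Real.rpow_le_rpow (by linarith) hab he
  · calc min ((1/2:ℝ) ^ (-2*t)) ((3/2:ℝ) ^ (-2*t)) * a ^ (-2*t)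
        ≤ (3/2:ℝ) ^ (-2*t) * a ^ (-2*t) :=
          mul_le_mul_of_nonneg_right (min_le_right _ _) (by positivity)
      _ = (3 * a / 2) ^ (-2*t) := by
          rw [← Real.mul_rpow (by norm_num) ha.le]; ring_nf
      _ ≤ b ^ (-2*t) := Real.rpow_le_rpow_of_nonpos hb hba he.le

lemma lemKey {t : ℝ} {f : ℂ → ℂ}
    (hd : DifferentiableOn ℂ f {z : ℂ | 0 < ‖z‖ ∧ ‖z‖ < 1})
    (hi : IntegrableOn (fun z : ℂ => ‖f z‖ ^ 2 * ‖z‖ ^ (-2 * t))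
      {z : ℂ | 0 < ‖z‖ ∧ ‖z‖ < 1 / 2} volume) :
    Tendsto (fun z : ℂ => z * (f z / z ^ (⌊t⌋ : ℤ))) (𝓝[≠] (0:ℂ)) (𝓝 0) := by
  set S1 := {z : ℂ | 0 < ‖z‖ ∧ ‖z‖ < 1} with hS1
  set S2 := {z : ℂ | 0 < ‖z‖ ∧ ‖z‖ < 1 / 2} with hS2
  set w : ℂ → ℝ := fun z => ‖f z‖ ^ 2 * ‖z‖ ^ (-2 * t) with hw
  have hS1o : IsOpen S1 := by
    have : S1 = (fun z : ℂ => ‖z‖) ⁻¹' (Ioo 0 1) := rfl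
    rw [this]
    exact isOpen_Ioo.preimage continuous_norm
  obtain ⟨κ, hκ, hWc⟩ := lemW t
  have hm : (⌊t⌋ : ℝ) ≤ t := Int.floor_le t
  have hw0 : ∀ z, 0 ≤ w z := fun z => by positivity
  -- the main pointwise bound
  have hbound : ∀ c : ℂ, 0 < ‖c‖ → ‖c‖ ≤ 1/4 →
      ‖c * (f c / c ^ (⌊t⌋ : ℤ))‖ ^ 2
        ≤ (4 / (π * κ)) * ∫ z in ball (0:ℂ) (2 * ‖c‖), w z ∂(volume.restrict S2) := by
    intro c hc hc4
    set a := ‖c‖ with ha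
    set E := ∫ z in ball (0:ℂ) (2 * a), w z ∂(volume.restrict S2) with hE
    have hE0 : 0 ≤ E := setIntegral_nonneg measurableSet_ball fun z _ => hw0 z
    have har : (0:ℝ) < a / 2 := by linarith
    have hball_mem : ∀ z ∈ closedBall c (a/2),
        a/2 ≤ ‖z‖ ∧ ‖z‖ ≤ 3*a/2 := by
      intro z hz
      rw [mem_closedBall, Complex.dist_eq] at hz
      have h1 := abs_norm_sub_norm_le z c
      obtain ⟨h2, h3⟩ := abs_le.1 h1
      constructor <;> [linarith; linarith]
    have hsub1 : closedBall c (a/2) ⊆ S1 := by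
      intro z hz
      obtain ⟨h1, h2⟩ := hball_mem z hz
      exact ⟨lt_of_lt_of_le har h1, by linarith⟩
    have hsub2 : ball c (a/2) ⊆ ball (0:ℂ) (2*a) ∩ S2 := by
      intro z hz
      obtain ⟨h1, h2⟩ := hball_mem z (ball_subset_closedBall hz)
      refine ⟨?_, lt_of_lt_of_le har h1, by linarith⟩
      rw [mem_ball_zero_iff]
      linarith
    have hdb : ∀ z ∈ closedBall c (a/2), DifferentiableAt ℂ f z := fun z hz =>
      hd.differentiableAt (hS1o.mem_nhds (hsub1 hz))
    have hMV := lemB har hdb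
    -- pointwise weight comparison on the ball
    have hwcomp : ∀ z ∈ ball c (a/2), ‖f z‖^2 ≤ κ⁻¹ * a^(2*t) * w z := by
      intro z hz
      obtain ⟨h1, h2⟩ := hball_mem z (ball_subset_closedBall hz)
      have hcomp := hWc a (‖z‖) hc h1 h2
      have hfz : ‖f z‖ = ‖f z‖ := rfl
      have haa : a ^ (2*t) * a ^ (-2*t) = 1 := by
        rw [← Real.rpow_add hc, show 2*t + -2*t = 0 by ring, Real.rpow_zero]
      calc ‖f z‖^2 = κ⁻¹ * a^(2*t) * (‖f z‖^2 * (κ * a^(-2*t))) := by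
            have hexp : κ⁻¹ * a^(2*t) * (‖f z‖^2 * (κ * a^(-2*t)))
                = ‖f z‖^2 * (κ⁻¹ * κ) * (a^(2*t) * a^(-2*t)) := by ring
            rw [hexp, haa, inv_mul_cancel₀ hκ.ne', mul_one, mul_one]
        _ ≤ κ⁻¹ * a^(2*t) * (‖f z‖^2 * ‖z‖ ^ (-2*t)) := by
            refine mul_le_mul_of_nonneg_left ?_ (by positivity)
            exact mul_le_mul_of_nonneg_left hcomp (by positivity)
        _ = κ⁻¹ * a^(2*t) * w z := by
            rw [hw]
    -- integrability on the small ball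
    have hcontf : ContinuousOn f (closedBall c (a/2)) :=
      fun z hz => (hdb z hz).continuousAt.continuousWithinAt
    have hint1 : IntegrableOn (fun z => ‖f z‖^2) (ball c (a/2)) :=
      ((hcontf.norm.pow 2).integrableOn_compact (isCompact_closedBall _ _)).mono_set
        ball_subset_closedBall
    have hint2 : IntegrableOn w (ball c (a/2)) :=
      hi.mono_set (fun z hz => (hsub2 hz).2)
    have hIball : ∫ z in ball c (a/2), ‖f z‖^2
        ≤ κ⁻¹ * a^(2*t) * ∫ z in ball c (a/2), w z := by
      rw [← MeasureTheory.integral_const_mul]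
      exact setIntegral_mono_on hint1 (hint2.const_mul _) measurableSet_ball hwcomp
    have hIw : ∫ z in ball c (a/2), w z ≤ E := by
      rw [hE, Measure.restrict_restrict measurableSet_ball]
      refine setIntegral_mono_set (hi.mono_set inter_subset_right) (ae_of_all _ hw0) ?_
      exact HasSubset.Subset.eventuallyLE hsub2
    have step : π * (a/2)^2 * ‖f c‖^2 ≤ κ⁻¹ * a^(2*t) * E :=
      le_trans hMV (le_trans hIball (mul_le_mul_of_nonneg_left hIw (by positivity)))
    -- algebra
    set X := a ^ (2*(t - (⌊t⌋:ℝ))) with hXdef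
    have hXpos : 0 < X := Real.rpow_pos_of_pos hc _
    have hle1 : X ≤ 1 := Real.rpow_le_one hc.le (by linarith) (by linarith)
    have hX' : X * a^(2*((⌊t⌋:ℝ))) = a^(2*t) := by
      rw [hXdef, ← Real.rpow_add hc, show 2*(t - (⌊t⌋:ℝ)) + 2*(⌊t⌋:ℝ) = 2*t by ring]
    have step' : π * (a/2)^2 * ‖f c‖^2 ≤ κ⁻¹ * (X * a^(2*((⌊t⌋:ℝ)))) * E := by
      rw [hX']
      exact step
    have hnorm : ‖c * (f c / c ^ (⌊t⌋:ℤ))‖^2 = a^2 * ‖f c‖^2 / (a ^ (⌊t⌋:ℤ))^2 := by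
      rw [norm_mul, norm_div, norm_zpow, ← ha,
        mul_pow, div_pow]
      ring
    have hazpos : (0:ℝ) < a ^ (⌊t⌋:ℤ) := zpow_pos hc _
    have hEq : (a ^ (⌊t⌋:ℤ))^2 = a ^ (2*((⌊t⌋:ℝ))) := by
      rw [← Real.rpow_intCast a ⌊t⌋, ← Real.rpow_natCast (a ^ (((⌊t⌋:ℤ)):ℝ)) 2,
        ← Real.rpow_mul hc.le]
      congr 1
      push_cast
      ring
    have hP : (0:ℝ) < a ^ (2*((⌊t⌋:ℝ))) := Real.rpow_pos_of_pos hc _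
    rw [hnorm, hEq, div_le_iff₀ hP]
    have hEnn : 0 ≤ 4/(π*κ) * E := by
      apply mul_nonneg _ hE0
      positivity
    calc a^2 * ‖f c‖^2 = (4/π) * (π * (a/2)^2 * ‖f c‖^2) := by
          field_simp
          ring
      _ ≤ (4/π) * (κ⁻¹ * (X * a^(2*((⌊t⌋:ℝ)))) * E) :=
          mul_le_mul_of_nonneg_left step' (by positivity)
      _ = (4/(π*κ) * E * a^(2*((⌊t⌋:ℝ)))) * X := by
          field_simp
      _ ≤ (4/(π*κ) * E * a^(2*((⌊t⌋:ℝ)))) * 1 := by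
          apply mul_le_mul_of_nonneg_left hle1
          exact mul_nonneg hEnn hP.le
      _ = 4/(π*κ) * E * a^(2*((⌊t⌋:ℝ))) := mul_one _
  -- the shrinking integral tends to zero
  have habs0 : Tendsto (fun c : ℂ => ‖c‖) (𝓝[≠] (0:ℂ)) (𝓝 0) := by
    have := (continuous_norm.tendsto (0:ℂ)).mono_left (nhdsWithin_le_nhds (s := {(0:ℂ)}ᶜ))
    simpa using this
  have hε : Tendsto (fun c : ℂ =>
        ∫ z in ball (0:ℂ) (2 * ‖c‖), w z ∂(volume.restrict S2))
      (𝓝[≠] (0:ℂ)) (𝓝 0) := by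
    apply hi.tendsto_setIntegral_nhds_zero
    have hub : Tendsto (fun c : ℂ => ENNReal.ofReal (2 * ‖c‖) ^ 2 * (NNReal.pi : ℝ≥0∞))
        (𝓝[≠] (0:ℂ)) (𝓝 0) := by
      have h1 : Tendsto (fun c : ℂ => ENNReal.ofReal (2 * ‖c‖)) (𝓝[≠] (0:ℂ)) (𝓝 0) := by
        have h2 : Tendsto (fun c : ℂ => 2 * ‖c‖) (𝓝[≠] (0:ℂ)) (𝓝 0) := by
          simpa using habs0.const_mul 2
        simpa using ENNReal.tendsto_ofReal h2
      have h3 := ENNReal.Tendsto.pow (n := 2) h1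
      simp only [zero_pow (two_ne_zero)] at h3
      have h4 := ENNReal.Tendsto.mul_const h3 (Or.inr (ENNReal.coe_ne_top (r := NNReal.pi)))
      simpa using h4
    refine tendsto_of_tendsto_of_tendsto_of_le_of_le tendsto_const_nhds hub
      (fun c => zero_le) (fun c => ?_)
    calc (volume.restrict S2 ∘ fun c : ℂ => ball (0:ℂ) (2 * ‖c‖)) c
        ≤ volume (ball (0:ℂ) (2 * ‖c‖)) := Measure.restrict_apply_le _ _
      _ = ENNReal.ofReal (2 * ‖c‖) ^ 2 * (NNReal.pi : ℝ≥0∞) := Complex.volume_ball _ _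
  -- squeeze
  have hev : ∀ᶠ c in 𝓝[≠] (0:ℂ), ‖c * (f c / c ^ (⌊t⌋:ℤ))‖^2
      ≤ (4/(π*κ)) * ∫ z in ball (0:ℂ) (2 * ‖c‖), w z ∂(volume.restrict S2) := by
    have h4 : ∀ᶠ c : ℂ in 𝓝[≠] (0:ℂ), ‖c‖ < 1/4 :=
      habs0.eventually_lt_const (by norm_num)
    filter_upwards [h4, self_mem_nhdsWithin] with c hlt hne
    exact hbound c (by simpa using hne) hlt.le
  have hsq : Tendsto (fun c : ℂ => ‖c * (f c / c ^ (⌊t⌋:ℤ))‖^2) (𝓝[≠] (0:ℂ)) (𝓝 0) := by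
    have := hε.const_mul (4/(π*κ))
    rw [mul_zero] at this
    exact squeeze_zero' (Eventually.of_forall fun c => by positivity) hev this
  have hn : Tendsto (fun c : ℂ => ‖c * (f c / c ^ (⌊t⌋:ℤ))‖) (𝓝[≠] (0:ℂ)) (𝓝 0) := by
    have hs := (Real.continuous_sqrt.tendsto 0).comp hsq
    rw [Real.sqrt_zero] at hs
    convert hs using 2 with c
    simp only [Function.comp_apply]
    exact (Real.sqrt_sq (norm_nonneg _)).symm
  exact tendsto_zero_iff_norm_tendsto_zero.2 hn

lemma lemPt (t : ℝ) (g : ℂ → ℂ) {z : ℂ} (hz : z ≠ 0) :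
    ‖z ^ (⌊t⌋ : ℤ) * g z‖ ^ 2 * ‖z‖ ^ (-2 * t)
      = ‖g z‖ ^ 2 * ‖z‖ ^ (2 * ((⌊t⌋ : ℝ) - t)) := by
  have ha : 0 < ‖z‖ := norm_pos_iff.mpr hz
  rw [norm_mul, norm_zpow, mul_pow]
  have h1 : (‖z‖ ^ (⌊t⌋ : ℤ)) ^ 2 = ‖z‖ ^ (2 * ((⌊t⌋ : ℝ))) := by
    rw [← Real.rpow_intCast (‖z‖) ⌊t⌋,
      ← Real.rpow_natCast (‖z‖ ^ (((⌊t⌋:ℤ)):ℝ)) 2, ← Real.rpow_mul ha.le]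
    congr 1
    push_cast
    ring
  rw [h1, mul_comm (‖z‖ ^ (2 * ((⌊t⌋:ℝ)))) (‖g z‖ ^ 2), mul_assoc,
    ← Real.rpow_add ha, show 2 * ((⌊t⌋:ℝ)) + -2 * t = 2 * ((⌊t⌋:ℝ) - t) by ring]

-- extension lemma

lemma lemExt {t : ℝ} {f : ℂ → ℂ}
    (hd : DifferentiableOn ℂ f {z : ℂ | 0 < ‖z‖ ∧ ‖z‖ < 1})
    (hi : IntegrableOn (fun z : ℂ => ‖f z‖ ^ 2 * ‖z‖ ^ (-2 * t))
      {z : ℂ | 0 < ‖z‖ ∧ ‖z‖ < 1 / 2} volume) :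
    ∃ g : ℂ → ℂ, DifferentiableOn ℂ g {z : ℂ | ‖z‖ < 1} ∧
      ∀ z ∈ {z : ℂ | 0 < ‖z‖ ∧ ‖z‖ < 1}, f z = z ^ (⌊t⌋ : ℤ) * g z := by
  set g₀ : ℂ → ℂ := fun z => f z / z ^ (⌊t⌋ : ℤ) with hg₀
  have hset : {z : ℂ | ‖z‖ < 1} \ {0} = {z : ℂ | 0 < ‖z‖ ∧ ‖z‖ < 1} := by
    ext z
    simp only [mem_diff, mem_setOf_eq, mem_singleton_iff]
    constructor
    · rintro ⟨h1, h2⟩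
      exact ⟨norm_pos_iff.mpr h2, h1⟩
    · rintro ⟨h1, h2⟩
      exact ⟨h2, norm_ne_zero_iff.1 (ne_of_gt h1)⟩
  have hd₀ : DifferentiableOn ℂ g₀ ({z : ℂ | ‖z‖ < 1} \ {0}) := by
    rw [hset]
    apply hd.div
    · exact fun z hz => (differentiableAt_zpow.mpr (Or.inl
        (norm_ne_zero_iff.1 (ne_of_gt hz.1)))).differentiableWithinAt
    · exact fun z hz => zpow_ne_zero _ (norm_ne_zero_iff.1 (ne_of_gt hz.1))
  have hnbhd : {z : ℂ | ‖z‖ < 1} ∈ 𝓝 (0:ℂ) := by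
    apply IsOpen.mem_nhds
    · have : {z : ℂ | ‖z‖ < 1} = (fun z : ℂ => ‖z‖) ⁻¹' (Iio 1) := rfl
      rw [this]
      exact isOpen_Iio.preimage continuous_norm
    · simp
  have htend := lemKey hd hi
  have ho : (fun z : ℂ => g₀ z - g₀ 0) =o[𝓝[≠] (0:ℂ)] fun z => (z - 0)⁻¹ := by
    rw [Asymptotics.isLittleO_iff_tendsto']
    · have h1 : Tendsto (fun z : ℂ => z * g₀ 0) (𝓝[≠] (0:ℂ)) (𝓝 0) := by
        have h0 : Continuous (fun z : ℂ => z * g₀ 0) := continuous_id.mul continuous_const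
        have := h0.tendsto (0:ℂ)
        simp only [zero_mul] at this
        exact this.mono_left nhdsWithin_le_nhds
      have h2 := htend.sub h1
      rw [sub_zero] at h2
      refine h2.congr' ?_
      filter_upwards [self_mem_nhdsWithin] with z hz
      have hz0 : z ≠ 0 := by simpa using hz
      simp only [sub_zero, div_eq_mul_inv, inv_inv]
      ring
    · filter_upwards [self_mem_nhdsWithin] with z hz
      intro h
      exact absurd h (inv_ne_zero (by simpa using hz))
  have hmain := Complex.differentiableOn_update_limUnder_of_isLittleO hnbhd hd₀ ho
  refine ⟨Function.update g₀ 0 (limUnder (𝓝[≠] (0:ℂ)) g₀), hmain, fun z hz => ?_⟩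
  have hz0 : z ≠ 0 := norm_ne_zero_iff.1 (ne_of_gt hz.1)
  rw [Function.update_of_ne hz0, hg₀]
  simp only
  rw [mul_comm]
  exact (div_mul_cancel₀ _ (zpow_ne_zero _ hz0)).symm

/-- For every `t : ℝ`, the set of holomorphic functions `f` on the punctured unit disk with
`∫_{0<|z|<1/2} |f(z)|² |z|^(-2t) dA < ∞` equals the set of functions of the form
`z^⌊t⌋ · g(z)` on the punctured disk, where `g` is holomorphic on the full unit disk and
`∫_{|z|<1/2} |g(z)|² |z|^(2(⌊t⌋ - t)) dA < ∞`. -/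
theorem stmt4 (t : ℝ) :
    {f : ℂ → ℂ | DifferentiableOn ℂ f {z : ℂ | 0 < ‖z‖ ∧ ‖z‖ < 1} ∧
        IntegrableOn (fun z : ℂ => ‖f z‖ ^ 2 * ‖z‖ ^ (-2 * t))
          {z : ℂ | 0 < ‖z‖ ∧ ‖z‖ < 1 / 2} volume}
      = {f : ℂ → ℂ | ∃ g : ℂ → ℂ,
          DifferentiableOn ℂ g {z : ℂ | ‖z‖ < 1} ∧
          IntegrableOn (fun z : ℂ => ‖g z‖ ^ 2 *
              ‖z‖ ^ (2 * ((⌊t⌋ : ℝ) - t)))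
            {z : ℂ | ‖z‖ < 1 / 2} volume ∧
          ∀ z ∈ {z : ℂ | 0 < ‖z‖ ∧ ‖z‖ < 1},
            f z = z ^ (⌊t⌋ : ℤ) * g z} := by
  have hS2m : MeasurableSet {z : ℂ | 0 < ‖z‖ ∧ ‖z‖ < 1 / 2} := by
    have : {z : ℂ | 0 < ‖z‖ ∧ ‖z‖ < 1/2} = (fun z : ℂ => ‖z‖) ⁻¹' (Ioo 0 (1/2)) := rfl
    rw [this]
    exact (isOpen_Ioo.preimage continuous_norm).measurableSet
  ext f
  simp only [mem_setOf_eq]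
  constructor
  · rintro ⟨hd, hi⟩
    obtain ⟨g, hg, hfg⟩ := lemExt hd hi
    refine ⟨g, hg, ?_, hfg⟩
    have hsplit : {z : ℂ | ‖z‖ < 1/2}
        = {z : ℂ | 0 < ‖z‖ ∧ ‖z‖ < 1/2} ∪ {0} := by
      ext z
      simp only [mem_setOf_eq, mem_union, mem_singleton_iff]
      constructor
      · intro h
        rcases eq_or_ne z 0 with h0 | h0
        · exact Or.inr h0
        · exact Or.inl ⟨norm_pos_iff.mpr h0, h⟩
      · rintro (⟨_, h⟩ | h)
        · exact h
        · simp [h]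
    rw [hsplit]
    apply IntegrableOn.union
    · refine IntegrableOn.congr_fun hi ?_ hS2m
      intro z hz
      have hz0 : z ≠ 0 := norm_ne_zero_iff.1 (ne_of_gt hz.1)
      have hz1 : z ∈ {z : ℂ | 0 < ‖z‖ ∧ ‖z‖ < 1} :=
        ⟨hz.1, lt_trans hz.2 (by norm_num)⟩
      simp only [hfg z hz1, lemPt t g hz0]
    · rw [IntegrableOn, Measure.restrict_eq_zero.2 (measure_singleton 0)]
      exact integrable_zero_measure
  · rintro ⟨g, hgd, hgi, hfg⟩
    constructor
    · have hmul : DifferentiableOn ℂ (fun z => z ^ (⌊t⌋ : ℤ) * g z)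
          {z : ℂ | 0 < ‖z‖ ∧ ‖z‖ < 1} := by
        apply DifferentiableOn.mul
        · exact fun z hz => (differentiableAt_zpow.mpr (Or.inl
            (norm_ne_zero_iff.1 (ne_of_gt hz.1)))).differentiableWithinAt
        · exact hgd.mono fun z hz => hz.2
      exact hmul.congr hfg
    · refine IntegrableOn.congr_fun (hgi.mono_set fun z hz => hz.2) ?_ hS2m
      intro z hz
      have hz0 : z ≠ 0 := norm_ne_zero_iff.1 (ne_of_gt hz.1)
      have hz1 : z ∈ {z : ℂ | 0 < ‖z‖ ∧ ‖z‖ < 1} :=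
        ⟨hz.1, lt_trans hz.2 (by norm_num)⟩
      simp only [hfg z hz1, lemPt t g hz0]
end

section
/- Let A be an n×n complex matrix all of whose eigenvalues have absolute value 1, and let t ∈ ℝ. Then there exists an n×n complex matrix Γ such that exp(-2πi Γ) = A and every eigenvalue of Γ is a real number lying in the half-open interval (t-1, t]. -/
open Polynomial NormedSpace Nat

variable {d : ℕ}

private lemma stmt11_aeval_smul (A : Matrix (Fin d) (Fin d) ℂ) (c : ℂ) (p : ℂ[X]) :
    aeval A (C c * p) = c • aeval A p := by
  rw [map_mul, aeval_C, ← Algebra.smul_def]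

private lemma stmt11_exp_nilp (M : Matrix (Fin d) (Fin d) ℂ) (r : ℕ) (h : M ^ r = 0) :
    exp M = ∑ k ∈ Finset.range r, ((k ! : ℂ))⁻¹ • M ^ k := by
  rw [exp_eq_tsum ℂ]
  exact tsum_eq_sum (fun k hk => by
    rw [pow_eq_zero_of_le (le_of_not_gt (fun hc => hk (Finset.mem_range.mpr hc))) h, smul_zero])

private lemma stmt11_exp_aeval_nilp (A : Matrix (Fin d) (Fin d) ℂ) (p : ℂ[X]) (r : ℕ)
    (h : aeval A (p ^ r) = 0) :
    exp (aeval A p) = aeval A (∑ k ∈ Finset.range r, ((k ! : ℂ))⁻¹ • p ^ k) := by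
  rw [stmt11_exp_nilp (aeval A p) r (by rw [← map_pow, h])]
  rw [map_sum]
  refine Finset.sum_congr rfl fun k _ => ?_
  rw [map_smul, map_pow]

private lemma stmt11_spec_iff (A : Matrix (Fin d) (Fin d) ℂ) (μ : ℂ) :
    μ ∈ spectrum ℂ A ↔ A.charpoly.IsRoot μ := by
  rw [spectrum.mem_iff]
  have h1 : (algebraMap ℂ (Matrix (Fin d) (Fin d) ℂ)) μ - A = Matrix.scalar (Fin d) μ - A := by
    congr 1
  rw [h1, Matrix.charpoly, IsRoot, _root_.eval_det, Matrix.matPolyEquiv_charmatrix,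
    eval_sub, eval_X, eval_C]
  simp [Matrix.isUnit_iff_isUnit_det, isUnit_iff_ne_zero]


set_option maxHeartbeats 4000000 in
private lemma stmt11_newton (A : Matrix (Fin d) (Fin d) ℂ) (pe pN : ℂ[X]) (rr : ℕ)
    (heN : aeval A (pe * pN) = aeval A pN)
    (hnil : aeval A (pN ^ (rr + 1)) = 0) :
    ∃ q P Z : ℂ[X],
      NormedSpace.exp (aeval A (pN * q)) = aeval A P ∧ P = 1 + pN * Z ∧
      aeval A pe * aeval A P = aeval A pe + aeval A pN := by
  have hkill : ∀ p : ℂ[X], pN ^ (rr + 1) ∣ p → aeval A p = 0 := by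
    rintro p ⟨z, rfl⟩
    rw [map_mul, hnil, zero_mul]
  have main : ∀ k : ℕ, ∃ q w : ℂ[X],
      aeval A pe * NormedSpace.exp (aeval A (pN * q))
        = aeval A (pe + pN + pN ^ (k + 1) * w) := by
    intro k
    induction k with
    | zero =>
      refine ⟨0, -1, ?_⟩
      rw [mul_zero, map_zero, NormedSpace.exp_zero, mul_one]
      congr 1
      ring
    | succ k ih =>
      obtain ⟨q, w, hqw⟩ := ih
      set G : ℂ[X] := ∑ i ∈ Finset.range (rr + 1), (-pN) ^ i with hGdef
      have hG : (1 + pN) * G = 1 - (-pN) ^ (rr + 1) := by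
        have h := geom_sum_mul (-pN) (rr + 1)
        rw [hGdef]
        linear_combination -h
      set Δ : ℂ[X] := pN ^ (k + 1) * w * G with hΔdef
      set cp : ℂ[X] := ∑ j ∈ Finset.range (rr + 1), (((j + 2)! : ℂ))⁻¹ • (-Δ) ^ j with hcpdef
      have hΔdvd : pN ∣ Δ := ⟨pN ^ k * w * G, by rw [hΔdef]; ring⟩
      have hnegΔ : aeval A ((-Δ) ^ (rr + 3)) = 0 := by
        have h1 : pN ^ (rr + 1) ∣ Δ ^ (rr + 3) :=
          (pow_dvd_pow pN (by omega)).trans (pow_dvd_pow_of_dvd hΔdvd _)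
        have h2 : (-Δ) ^ (rr + 3) = (-1) ^ (rr + 3) * Δ ^ (rr + 3) := by
          rw [neg_pow]
        exact hkill _ (h2 ▸ h1.mul_left _)
      have hexpΔ : NormedSpace.exp (aeval A (-Δ)) = aeval A (1 - Δ + Δ ^ 2 * cp) := by
        rw [stmt11_exp_aeval_nilp A (-Δ) (rr + 3) hnegΔ]
        congr 1
        rw [Finset.sum_range_succ', Finset.sum_range_succ']
        have hsum : ∑ j ∈ Finset.range (rr + 1), (((j + 1 + 1)! : ℂ))⁻¹ • (-Δ) ^ (j + 1 + 1)
            = Δ ^ 2 * cp := by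
          rw [hcpdef, Finset.mul_sum]
          refine Finset.sum_congr rfl fun j _ => ?_
          rw [mul_smul_comm]
          congr 1
          ring
        rw [hsum]
        simp [Nat.factorial]
        ring
      refine ⟨q - pN ^ k * w * G,
        -(-pN) ^ rr * w - pN ^ k * w ^ 2 * G
          + (pe + pN + pN ^ (k + 1) * w) * (pN ^ k * w ^ 2 * G ^ 2 * cp), ?_⟩
      have e1 : aeval A (pN * (q - pN ^ k * w * G)) = aeval A (pN * q) + aeval A (-Δ) := by
        rw [← map_add]
        congr 1
        rw [hΔdef]
        ring
      have hcomm : Commute (aeval A (pN * q)) (aeval A (-Δ)) := by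
        show _ * _ = _ * _
        rw [← map_mul, ← map_mul, mul_comm]
      calc aeval A pe * NormedSpace.exp (aeval A (pN * (q - pN ^ k * w * G)))
          = aeval A pe * (NormedSpace.exp (aeval A (pN * q))
              * NormedSpace.exp (aeval A (-Δ))) := by
            rw [e1, Matrix.exp_add_of_commute _ _ hcomm]
        _ = (aeval A pe * NormedSpace.exp (aeval A (pN * q)))
              * NormedSpace.exp (aeval A (-Δ)) := by rw [mul_assoc]
        _ = aeval A (pe + pN + pN ^ (k + 1) * w) * aeval A (1 - Δ + Δ ^ 2 * cp) := by
            rw [hqw, hexpΔ]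
        _ = aeval A ((pe + pN + pN ^ (k + 1) * w) * (1 - Δ + Δ ^ 2 * cp)) := (map_mul _ _ _).symm
        _ = aeval A (pe + pN + pN ^ (k + 1 + 1) *
              (-(-pN) ^ rr * w - pN ^ k * w ^ 2 * G
                + (pe + pN + pN ^ (k + 1) * w) * (pN ^ k * w ^ 2 * G ^ 2 * cp)))
            - aeval A ((pe * pN - pN) * (pN ^ k * w * G)) := by
            rw [← map_sub]
            congr 1
            rw [hΔdef]
            linear_combination (-(pN ^ (k + 1) * w)) * hG
        _ = aeval A (pe + pN + pN ^ (k + 1 + 1) *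
              (-(-pN) ^ rr * w - pN ^ k * w ^ 2 * G
                + (pe + pN + pN ^ (k + 1) * w) * (pN ^ k * w ^ 2 * G ^ 2 * cp))) := by
            rw [map_mul, show aeval A (pe * pN - pN) = 0 from by rw [map_sub, heN, sub_self],
              zero_mul, sub_zero]
  obtain ⟨q, w, hqw⟩ := main rr
  have hPnil : aeval A ((pN * q) ^ (rr + 1)) = 0 := by
    refine hkill _ ?_
    rw [mul_pow]
    exact Dvd.intro _ rfl
  refine ⟨q, ∑ k ∈ Finset.range (rr + 1), ((k ! : ℂ))⁻¹ • (pN * q) ^ k,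
    ∑ j ∈ Finset.range rr, (((j + 1)! : ℂ))⁻¹ • (q * (pN * q) ^ j), stmt11_exp_aeval_nilp A _ _ hPnil,
    ?_, ?_⟩
  · rw [Finset.sum_range_succ', Finset.mul_sum]
    simp only [pow_zero, Nat.factorial_zero, Nat.cast_one, inv_one, one_smul]
    rw [add_comm]
    congr 1
    refine Finset.sum_congr rfl fun j _ => ?_
    rw [mul_smul_comm]
    congr 1
    ring
  · rw [← stmt11_exp_aeval_nilp A _ _ hPnil, hqw, map_add, map_add, map_mul, hnil, zero_mul, add_zero]




private lemma stmt11_exp_idem (c : ℂ) (e : Matrix (Fin d) (Fin d) ℂ) (he : e * e = e) :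
    exp (c • e) = 1 + (Complex.exp c - 1) • e := by
  letI : SeminormedRing (Matrix (Fin d) (Fin d) ℂ) := Matrix.linftyOpSemiNormedRing
  letI : NormedRing (Matrix (Fin d) (Fin d) ℂ) := Matrix.linftyOpNormedRing
  letI : NormedAlgebra ℂ (Matrix (Fin d) (Fin d) ℂ) := Matrix.linftyOpNormedAlgebra
  have hepow : ∀ k : ℕ, e ^ (k + 1) = e := by
    intro k
    induction k with
    | zero => rw [pow_one]
    | succ k ih => rw [pow_succ, ih, he]
  have hg : Summable fun k : ℕ => ((k ! : ℂ))⁻¹ * c ^ k := by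
    have := NormedSpace.expSeries_summable' (𝕂 := ℂ) (𝔸 := ℂ) c
    simpa [smul_eq_mul] using this
  rw [exp_eq_tsum ℂ]
  have key : ∀ k : ℕ, ((k ! : ℂ))⁻¹ • (c • e) ^ k =
      (((k ! : ℂ))⁻¹ * c ^ k) • e + (if k = 0 then (1 : Matrix (Fin d) (Fin d) ℂ) - e else 0) := by
    intro k
    cases k with
    | zero => simp
    | succ k => rw [_root_.smul_pow, smul_smul, hepow, if_neg (Nat.succ_ne_zero k), add_zero]
  calc ∑' k : ℕ, ((k ! : ℂ))⁻¹ • (c • e) ^ k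
      = ∑' k : ℕ, ((((k ! : ℂ))⁻¹ * c ^ k) • e
        + (if k = 0 then (1 : Matrix (Fin d) (Fin d) ℂ) - e else 0)) := tsum_congr key
    _ = (∑' k : ℕ, (((k ! : ℂ))⁻¹ * c ^ k) • e)
        + ∑' k : ℕ, (if k = 0 then (1 : Matrix (Fin d) (Fin d) ℂ) - e else 0) := by
        refine Summable.tsum_add (hg.smul_const e) ?_
        exact summable_of_ne_finset_zero (s := {0}) (fun k hk => if_neg (by simpa using hk))
    _ = (∑' k : ℕ, ((k ! : ℂ))⁻¹ * c ^ k) • e + ((1 : Matrix (Fin d) (Fin d) ℂ) - e) := by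
        rw [Summable.tsum_smul_const hg _, tsum_ite_eq]
    _ = 1 + (Complex.exp c - 1) • e := by
        have : ∑' k : ℕ, ((k ! : ℂ))⁻¹ * c ^ k = Complex.exp c := by
          rw [Complex.exp_eq_exp_ℂ, exp_eq_tsum ℂ]
          simp [smul_eq_mul]
        rw [this, sub_smul, one_smul]
        abel


private lemma stmt11_exists_log (t : ℝ) (l : ℂ) (hl : ‖l‖ = 1) :
    ∃ a : ℝ, (t - 1 < a ∧ a ≤ t) ∧ Complex.exp (-(2 * Real.pi * Complex.I) * a) = l := by
  set x : ℝ := -(Complex.arg l) / (2 * Real.pi) with hx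
  refine ⟨t - Int.fract (t - x), ⟨?_, ?_⟩, ?_⟩
  · have := Int.fract_lt_one (t - x)
    linarith
  · have := Int.fract_nonneg (t - x)
    linarith
  · have hπ : (Real.pi : ℝ) ≠ 0 := Real.pi_ne_zero
    have ha : (t - Int.fract (t - x)) = x + (⌊t - x⌋ : ℝ) := by
      rw [Int.fract]; ring
    rw [ha]
    have hx2 : (2 * Real.pi) * x = -Complex.arg l := by
      rw [hx]; field_simp
    have hc : (2 * (Real.pi : ℂ)) * (x : ℂ) = -((Complex.arg l : ℝ) : ℂ) := by
      exact_mod_cast congrArg (fun r : ℝ => (r : ℂ)) hx2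
    have key : -(2 * (Real.pi : ℂ) * Complex.I) * ((x + (⌊t - x⌋ : ℝ) : ℝ) : ℂ)
        = ((Complex.arg l : ℝ) : ℂ) * Complex.I
          + ((-⌊t - x⌋ : ℤ) : ℂ) * (2 * (Real.pi : ℂ) * Complex.I) := by
      push_cast
      linear_combination (-Complex.I) * hc
    rw [key, Complex.exp_add, Complex.exp_int_mul_two_pi_mul_I, mul_one]
    have h2 := Complex.norm_mul_exp_arg_mul_I l
    rw [hl] at h2
    simpa using h2

set_option maxHeartbeats 1000000 in
/-- Let `A` be an `n × n` complex matrix all of whose eigenvalues have absolute value `1`,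
and `t : ℝ`. Then there is an `n × n` complex matrix `Γ` with `exp(-2πi Γ) = A` whose
eigenvalues are all real numbers in the half-open interval `(t - 1, t]`. -/
theorem stmt11 (n : ℕ) (A : Matrix (Fin n) (Fin n) ℂ)
    (hA : ∀ μ ∈ spectrum ℂ A, ‖μ‖ = 1) (t : ℝ) :
    ∃ Γ : Matrix (Fin n) (Fin n) ℂ,
      NormedSpace.exp ((-(2 * Real.pi * Complex.I)) • Γ) = A ∧
      ∀ μ ∈ spectrum ℂ Γ, ∃ a : ℝ, μ = (a : ℂ) ∧ t - 1 < a ∧ a ≤ t := by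
  classical
  set c₀ : ℂ := -(2 * Real.pi * Complex.I) with hc₀
  have hc₀ne : c₀ ≠ 0 := by
    rw [hc₀]
    exact neg_ne_zero.mpr (mul_ne_zero (mul_ne_zero two_ne_zero
      (by exact_mod_cast Real.pi_ne_zero)) Complex.I_ne_zero)
  set χ : ℂ[X] := A.charpoly with hχdef
  have hmonic : χ.Monic := A.charpoly_monic
  have hCH : aeval A χ = 0 := A.aeval_self_charpoly
  have kill : ∀ p : ℂ[X], χ ∣ p → aeval A p = 0 := by
    rintro p ⟨z, rfl⟩
    rw [map_mul, hCH, zero_mul]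
  set s : Finset ℂ := χ.roots.toFinset with hsdef
  set m : ℂ → ℕ := fun l => χ.roots.count l with hmdef
  set f : ℂ → ℂ[X] := fun l => (X - C l) ^ m l with hfdef
  have hsplit : χ = ∏ l ∈ s, f l := by
    conv_lhs => rw [(IsAlgClosed.splits χ).eq_prod_roots_of_monic hmonic]
    rw [Finset.prod_multiset_map_count]
  have hroot_mem : ∀ l : ℂ, l ∈ s ↔ l ∈ spectrum ℂ A := by
    intro l
    rw [hsdef, Multiset.mem_toFinset, mem_roots hmonic.ne_zero, stmt11_spec_iff]
  have habs : ∀ l ∈ s, ‖l‖ = 1 := fun l hl => hA l ((hroot_mem l).1 hl)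
  have hne0 : ∀ l ∈ s, l ≠ 0 := by
    intro l hl h0
    have := habs l hl
    rw [h0] at this
    simp at this
  have hmpos : ∀ l ∈ s, 0 < m l := by
    intro l hl
    exact Multiset.count_pos.mpr (Multiset.mem_toFinset.mp hl)
  have hcop : ∀ l1 ∈ s, ∀ l2 ∈ s, l1 ≠ l2 → IsCoprime (f l1) (f l2) := by
    intro l1 _ l2 _ hne
    refine IsCoprime.pow ?_
    have hc : l2 - l1 ≠ 0 := sub_ne_zero.mpr (Ne.symm hne)
    refine ⟨C (l2 - l1)⁻¹, -(C (l2 - l1)⁻¹), ?_⟩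
    have h1 : (C ((l2 - l1)⁻¹) : ℂ[X]) * C (l2 - l1) = 1 := by
      rw [← C_mul, inv_mul_cancel₀ hc, C_1]
    rw [map_sub] at h1
    linear_combination h1
  have hχdvd : ∀ l ∈ s, χ = f l * ∏ μ ∈ s.erase l, f μ := by
    intro l hl
    rw [hsplit, ← Finset.prod_erase_mul s f hl, mul_comm]
  have hEex : ∀ l : ℂ, ∃ E : ℂ[X], l ∈ s →
      ((∏ μ ∈ s.erase l, f μ) ∣ E ∧ f l ∣ (1 - E)) := by
    intro l
    by_cases hl : l ∈ s
    · have hcop2 : IsCoprime (f l) (∏ μ ∈ s.erase l, f μ) :=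
        IsCoprime.prod_right fun μ hμ =>
          hcop l hl μ (Finset.mem_of_mem_erase hμ) (Ne.symm (Finset.ne_of_mem_erase hμ))
      obtain ⟨u, v, huv⟩ := hcop2
      refine ⟨v * ∏ μ ∈ s.erase l, f μ, fun _ => ⟨Dvd.intro_left v rfl, ⟨u, ?_⟩⟩⟩
      linear_combination -huv
    · exact ⟨0, fun h => absurd h hl⟩
  choose E hE using hEex
  set e : ℂ → Matrix (Fin n) (Fin n) ℂ := fun l => aeval A (E l) with hedef
  have hEdvd1 : ∀ l ∈ s, (∏ μ ∈ s.erase l, f μ) ∣ E l := fun l hl => ((hE l) hl).1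
  have hEdvd2 : ∀ l ∈ s, f l ∣ (1 - E l) := fun l hl => ((hE l) hl).2
  have hfEdvd : ∀ l ∈ s, ∀ μ ∈ s, μ ≠ l → f μ ∣ E l := by
    intro l hl μ hμ hne
    exact (Finset.dvd_prod_of_mem f (Finset.mem_erase.mpr ⟨hne, hμ⟩)).trans (hEdvd1 l hl)
  have hdvd_idem : ∀ l ∈ s, χ ∣ E l * E l - E l := by
    intro l hl
    rw [hχdvd l hl]
    have h2 : f l ∣ E l - 1 := dvd_sub_comm.mp (hEdvd2 l hl)
    have h3 := mul_dvd_mul h2 (hEdvd1 l hl)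
    have h4 : E l * E l - E l = (E l - 1) * E l := by ring
    rw [h4]
    exact h3
  have he_orth : ∀ l1 ∈ s, ∀ l2 ∈ s, l1 ≠ l2 → e l1 * e l2 = 0 := by
    intro l1 h1 l2 h2 hne
    show aeval A (E l1) * aeval A (E l2) = 0
    rw [← map_mul]
    refine kill _ ?_
    rw [hχdvd l1 h1]
    have := mul_dvd_mul (hfEdvd l2 h2 l1 h1 hne) (hEdvd1 l1 h1)
    rwa [mul_comm (E l2)] at this
  have he_idem : ∀ l ∈ s, e l * e l = e l := by
    intro l hl
    have h := kill _ (hdvd_idem l hl)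
    rw [map_sub, map_mul, sub_eq_zero] at h
    exact h
  have he_sum : ∑ l ∈ s, e l = 1 := by
    have hdvd : χ ∣ (∑ l ∈ s, E l) - 1 := by
      rw [hsplit]
      refine Finset.prod_dvd_of_coprime ?_ ?_
      · intro l1 h1 l2 h2 hne
        exact hcop l1 h1 l2 h2 hne
      · intro l hl
        have h1 : f l ∣ E l - 1 := dvd_sub_comm.mp (hEdvd2 l hl)
        have h3 : f l ∣ ∑ μ ∈ s.erase l, E μ := Finset.dvd_sum fun μ hμ =>
          hfEdvd μ (Finset.mem_of_mem_erase hμ) l hl (Ne.symm (Finset.ne_of_mem_erase hμ))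
        have h4 : (∑ l ∈ s, E l) - 1 = (E l - 1) + ∑ μ ∈ s.erase l, E μ := by
          rw [← Finset.add_sum_erase s E hl]
          ring
        rw [h4]
        exact dvd_add h1 h3
    have h := kill _ hdvd
    rw [map_sub, map_one, sub_eq_zero, map_sum] at h
    exact h
  have hEval_self : ∀ l ∈ s, (E l).eval l = 1 := by
    intro l hl
    obtain ⟨cpol, hcp⟩ := hEdvd2 l hl
    have h := congrArg (eval l) hcp
    simp only [eval_sub, eval_one, eval_mul, hfdef, eval_pow, eval_X, eval_C, sub_self,
      zero_pow (hmpos l hl).ne', zero_mul] at h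
    have := sub_eq_zero.mp h
    exact this.symm
  have hEval_ne : ∀ l ∈ s, ∀ μ ∈ s, μ ≠ l → (E l).eval μ = 0 := by
    intro l hl μ hμ hne
    obtain ⟨cpol, hcp⟩ := hfEdvd l hl μ hμ hne
    have h := congrArg (eval μ) hcp
    simp only [eval_mul, hfdef, eval_pow, eval_sub, eval_X, eval_C, sub_self,
      zero_pow (hmpos μ hμ).ne', zero_mul] at h
    exact h
  have hlog : ∀ l : ℂ, ∃ av : ℝ, l ∈ s →
      ((t - 1 < av ∧ av ≤ t) ∧ Complex.exp (c₀ * av) = l) := by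
    intro l
    by_cases hl : l ∈ s
    · obtain ⟨av, h1, h2⟩ := stmt11_exists_log t l (habs l hl)
      rw [← hc₀] at h2
      exact ⟨av, fun _ => ⟨h1, h2⟩⟩
    · exact ⟨0, fun h => absurd h hl⟩
  choose a ha using hlog
  have ha_bound : ∀ l ∈ s, t - 1 < a l ∧ a l ≤ t := fun l hl => ((ha l) hl).1
  have ha_exp : ∀ l ∈ s, Complex.exp (c₀ * a l) = l := fun l hl => ((ha l) hl).2
  set Np : ℂ → ℂ[X] := fun l => C l⁻¹ * (X - C l) * E l with hNpdef
  have heN : ∀ l ∈ s, aeval A (E l * Np l) = aeval A (Np l) := by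
    intro l hl
    have hid : E l * Np l - Np l = (C l⁻¹ * (X - C l)) * (E l * E l - E l) := by
      simp only [hNpdef]
      ring
    have h0 : aeval A (E l * Np l - Np l) = 0 := by
      rw [hid]
      exact kill _ ((hdvd_idem l hl).mul_left _)
    rw [map_sub, sub_eq_zero] at h0
    exact h0
  have hNnil : ∀ l ∈ s, aeval A (Np l ^ (m l - 1 + 1)) = 0 := by
    intro l hl
    rw [Nat.sub_add_cancel (hmpos l hl)]
    refine kill _ ?_
    have hexp2 : Np l ^ m l = (C l⁻¹) ^ m l * ((X - C l) ^ m l * E l ^ m l) := by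
      simp only [hNpdef]
      rw [mul_pow, mul_pow]
      ring
    rw [hexp2]
    refine Dvd.dvd.mul_left ?_ _
    rw [hχdvd l hl]
    exact mul_dvd_mul dvd_rfl ((hEdvd1 l hl).trans (dvd_pow_self (E l) (hmpos l hl).ne'))
  have hnewt : ∀ l : ℂ, ∃ q P Z : ℂ[X], l ∈ s →
      (NormedSpace.exp (aeval A (Np l * q)) = aeval A P ∧ P = 1 + Np l * Z ∧
        aeval A (E l) * aeval A P = aeval A (E l) + aeval A (Np l)) := by
    intro l
    by_cases hl : l ∈ s
    · obtain ⟨q, P, Z, h1, h2, h3⟩ :=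
        stmt11_newton A (E l) (Np l) (m l - 1) (heN l hl) (hNnil l hl)
      exact ⟨q, P, Z, fun _ => ⟨h1, h2, h3⟩⟩
    · exact ⟨0, 1, 0, fun h => absurd h hl⟩
  choose q P Z hPZ using hnewt
  have hexpP : ∀ l ∈ s, aeval A (P l) = 1 + aeval A (Np l) := by
    intro l hl
    obtain ⟨_, h2, h3⟩ := hPZ l hl
    have hz : aeval A (E l * (Np l * Z l)) = aeval A (Np l * Z l) := by
      have hid : E l * (Np l * Z l) - Np l * Z l
          = ((C l⁻¹ * (X - C l)) * Z l) * (E l * E l - E l) := by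
        simp only [hNpdef]
        ring
      have h0 : aeval A (E l * (Np l * Z l) - Np l * Z l) = 0 := by
        rw [hid]
        exact kill _ ((hdvd_idem l hl).mul_left _)
      rw [map_sub, sub_eq_zero] at h0
      exact h0
    have hP1 : aeval A (P l) = 1 + aeval A (Np l * Z l) := by
      rw [h2, map_add, map_one]
    have h4 : aeval A (E l) * aeval A (P l) = aeval A (E l) + aeval A (Np l * Z l) := by
      rw [hP1, mul_add, mul_one, ← map_mul, hz]
    rw [h4] at h3
    rw [hP1, add_left_cancel h3]
  have hAe_comm : ∀ l : ℂ, A * e l = e l * A := by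
    intro l
    calc A * e l = aeval A X * aeval A (E l) := by rw [aeval_X]
      _ = aeval A (X * E l) := (map_mul _ _ _).symm
      _ = aeval A (E l * X) := by rw [mul_comm]
      _ = e l * A := by rw [map_mul, aeval_X]
  have hlN : ∀ l ∈ s, l • aeval A (Np l) = A * e l - l • e l := by
    intro l hl
    have h1 : (C l : ℂ[X]) * Np l = (X - C l) * E l := by
      simp only [hNpdef]
      have hinv : (C l : ℂ[X]) * C l⁻¹ = 1 := by
        rw [← C_mul, mul_inv_cancel₀ (hne0 l hl), C_1]
      linear_combination ((X - C l) * E l) * hinv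
    have h2 : l • aeval A (Np l) = aeval A ((X - C l) * E l) := by
      rw [← h1, map_mul (aeval A) (C l) (Np l), aeval_C, ← Algebra.smul_def]
    rw [h2, map_mul, map_sub, aeval_X, aeval_C, sub_mul, ← Algebra.smul_def]
  set σp : ℂ → ℂ[X] := fun l => C (c₀ * (a l : ℂ)) * E l + Np l * q l with hσdef
  have hexpS : ∀ l ∈ s, NormedSpace.exp (aeval A (σp l)) = 1 - e l + A * e l := by
    intro l hl
    have hsplit2 : aeval A (σp l)
        = aeval A (C (c₀ * (a l : ℂ)) * E l) + aeval A (Np l * q l) := by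
      simp only [hσdef]
      rw [map_add]
    have hcomm : Commute (aeval A (C (c₀ * (a l : ℂ)) * E l)) (aeval A (Np l * q l)) := by
      show _ * _ = _ * _
      rw [← map_mul, ← map_mul, mul_comm]
    rw [hsplit2, Matrix.exp_add_of_commute _ _ hcomm, stmt11_aeval_smul,
      stmt11_exp_idem _ _ (he_idem l hl), (hPZ l hl).1, ha_exp l hl, hexpP l hl]
    set Nmat := aeval A (Np l) with hNmat
    have heNmat : e l * Nmat = Nmat := by
      show aeval A (E l) * aeval A (Np l) = aeval A (Np l)
      rw [← map_mul, heN l hl]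
    have hx : (1 + (l - 1) • e l) * (1 + Nmat)
        = 1 + Nmat + ((l - 1) • e l) + ((l - 1) • e l) * Nmat := by
      noncomm_ring
    rw [hx, smul_mul_assoc, heNmat]
    have h5 : Nmat + (l - 1) • Nmat = l • Nmat := by
      rw [sub_smul, one_smul]
      abel
    calc 1 + Nmat + (l - 1) • e l + (l - 1) • Nmat
        = 1 + (l - 1) • e l + (Nmat + (l - 1) • Nmat) := by abel
      _ = 1 + (l - 1) • e l + (A * e l - l • e l) := by rw [h5, hlN l hl]
      _ = 1 - e l + A * e l := by
          rw [sub_smul, one_smul]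
          abel
  have hclaim : ∀ s' : Finset ℂ, s' ⊆ s →
      NormedSpace.exp (aeval A (∑ l ∈ s', σp l))
        = 1 - (∑ l ∈ s', e l) + A * (∑ l ∈ s', e l) := by
    intro s' hs'
    induction s' using Finset.induction_on with
    | empty => simp
    | @insert μ s₀ hμ ih =>
      have hμs : μ ∈ s := hs' (Finset.mem_insert_self μ s₀)
      have hsub0 : s₀ ⊆ s := fun x hx => hs' (Finset.mem_insert_of_mem hx)
      rw [Finset.sum_insert hμ, map_add]
      have hcomm : Commute (aeval A (σp μ)) (aeval A (∑ l ∈ s₀, σp l)) := by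
        show _ * _ = _ * _
        rw [← map_mul, ← map_mul, mul_comm]
      rw [Matrix.exp_add_of_commute _ _ hcomm, hexpS μ hμs, ih hsub0,
        Finset.sum_insert hμ]
      set b := ∑ l ∈ s₀, e l with hb
      have hab : e μ * b = 0 := by
        rw [hb, Finset.mul_sum]
        refine Finset.sum_eq_zero fun l hl => he_orth μ hμs l (hsub0 hl) ?_
        rintro rfl
        exact hμ hl
      have haux1 : e μ * (A * b) = A * (e μ * b) := by
        rw [← mul_assoc, ← hAe_comm μ, mul_assoc]
      have hA1 : (1 : Matrix (Fin n) (Fin n) ℂ) - e μ + A * e μ = 1 + (A * e μ - e μ) := by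
        abel
      have hA2 : (1 : Matrix (Fin n) (Fin n) ℂ) - b + A * b = 1 + (A * b - b) := by
        abel
      rw [hA1, hA2]
      have t3 : e μ * (A * b) = 0 := by rw [haux1, hab, mul_zero]
      have t1 : A * e μ * (A * b) = 0 := by rw [mul_assoc, t3, mul_zero]
      have t2 : A * e μ * b = 0 := by rw [mul_assoc, hab, mul_zero]
      have huv : (A * e μ - e μ) * (A * b - b) = 0 := by
        rw [sub_mul, mul_sub, mul_sub, t1, t2, t3, hab]
        simp
      have hfin : (1 + (A * e μ - e μ)) * (1 + (A * b - b))
          = 1 + (A * e μ - e μ) + (A * b - b) + (A * e μ - e μ) * (A * b - b) := by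
        noncomm_ring
      rw [hfin, huv, add_zero, mul_add]
      abel
  set PΓ : ℂ[X] := ∑ l ∈ s, (C ((a l : ℂ)) * E l + C c₀⁻¹ * (Np l * q l)) with hPΓ
  refine ⟨aeval A PΓ, ?_, ?_⟩
  · have harg : c₀ • aeval A PΓ = aeval A (∑ l ∈ s, σp l) := by
      rw [← stmt11_aeval_smul]
      congr 1
      rw [hPΓ, Finset.mul_sum]
      refine Finset.sum_congr rfl fun l hl => ?_
      simp only [hσdef]
      have hcc : (C c₀ : ℂ[X]) * C c₀⁻¹ = 1 := by
        rw [← C_mul, mul_inv_cancel₀ hc₀ne, C_1]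
      have hcc2 : (C c₀ : ℂ[X]) * C ((a l : ℂ)) = C (c₀ * (a l : ℂ)) := by
        rw [← C_mul]
      linear_combination E l * hcc2 + (Np l * q l) * hcc
    rw [harg, hclaim s (subset_refl s), he_sum, mul_one]
    simp
  · intro μ hμ
    rcases Nat.eq_zero_or_pos n with hn | hn
    · exfalso
      subst hn
      exact spectrum.mem_iff.mp hμ (isUnit_of_subsingleton _)
    · have hnonempty : (spectrum ℂ A).Nonempty := by
        have hdeg : χ.degree ≠ 0 := by
          rw [hχdef, Matrix.charpoly_degree_eq_dim, Fintype.card_fin]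
          exact_mod_cast hn.ne'
        obtain ⟨z, hz⟩ := IsAlgClosed.exists_root χ hdeg
        exact ⟨z, (stmt11_spec_iff A z).mpr hz⟩
      rw [spectrum.map_polynomial_aeval_of_nonempty A PΓ hnonempty] at hμ
      obtain ⟨l, hlspec, rfl⟩ := hμ
      have hls : l ∈ s := (hroot_mem l).2 hlspec
      refine ⟨a l, ?_, (ha_bound l hls).1, (ha_bound l hls).2⟩
      show eval l PΓ = ((a l : ℝ) : ℂ)
      rw [hPΓ, eval_finset_sum, Finset.sum_eq_single l ?_ ?_]
      · simp only [hNpdef, eval_add, eval_mul, eval_C, eval_sub, eval_X]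
        rw [hEval_self l hls]
        ring_nf
      · intro μ' hμ' hne
        simp only [hNpdef, eval_add, eval_mul, eval_C, eval_sub, eval_X]
        rw [hEval_ne μ' hμ' l hls (Ne.symm hne)]
        ring
      · intro habs'
        exact absurd hls habs'
end
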